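/- For the NFA of Figure 2 with states q₀, q₁, ..., q_n, f (unspecified transitions going to a losing sink): Player 1 wins the m-population game if and only if m < n. In particular the cut-off of this family equals the number of intermediate states n. -/

import Mathlib

/-- States of the NFA of Figure 2: initial state, n intermediate states,
the target, and a losing sink. -/
inductive Q15 (n : ℕ) : Type
  | init | target | sink
  | mid (i : Fin n)

/-- Alphabet: the letter b and the letters a₁, ..., aₙ. -/
inductive A15 (n : ℕ) : Type
  | b
  | a (i : Fin n)

/-- Transitions: b goes from the initial state to every intermediate state and back;
aⱼ goes from qᵢ (i ≠ j) to the target and from qⱼ to the sink; letters loop on the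
target; all unspecified transitions go to the losing sink. -/
def d15 {n : ℕ} : Q15 n → A15 n → Q15 n → Prop
  | .init, .b, .mid _ => True
  | .init, .a _, .sink => True
  | .mid _, .b, .init => True
  | .mid i, .a j, .target => i ≠ j
  | .mid i, .a j, .sink => i = j
  | .target, _, .target => True
  | .sink, _, .sink => True
  | _, _, _ => False

/-- σ is a winning strategy for Player 1 in the m-population game. -/
def PopWinningStrat {Q A : Type} (Δ : Q → A → Q → Prop) (q0 f : Q) (m : ℕ)
    (σ : List ((Fin m → Q) × A) → (Fin m → Q) → A) : Prop :=
  ∀ (ρ : ℕ → (Fin m → Q)) (acts : ℕ → A),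
    ρ 0 = (fun _ => q0) →
    (∀ n, acts n = σ (List.ofFn (fun i : Fin n => (ρ i.1, acts i.1))) (ρ n)) →
    (∀ n j, Δ (ρ n j) (acts n) (ρ (n + 1) j)) →
    ∃ n, ∀ j, ρ n j = f

/-- Player 1 wins the m-population game. -/
def PopWins {Q A : Type} (Δ : Q → A → Q → Prop) (q0 f : Q) (m : ℕ) : Prop :=
  ∃ σ, PopWinningStrat Δ q0 f m σ

/-! ### Auxiliary material for the proof -/

/-- Player 2's response for a single agent. -/
def stepQ15 {n m : ℕ} (hn : 0 < n) (j : Fin m) : Q15 n → A15 n → Q15 n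
  | .init, .b => .mid ⟨j.1 % n, Nat.mod_lt _ hn⟩
  | .init, .a _ => .sink
  | .mid _, .b => .init
  | .mid i, .a k => if i = k then .sink else .target
  | .target, _ => .target
  | .sink, _ => .sink

lemma stepQ15_valid {n m : ℕ} (hn : 0 < n) (j : Fin m) (q : Q15 n) (a : A15 n) :
    d15 q a (stepQ15 hn j q a) := by
  cases q with
  | init => cases a <;> simp [stepQ15, d15]
  | target => cases a <;> simp [stepQ15, d15]
  | sink => cases a <;> simp [stepQ15, d15]
  | mid i =>
    cases a with
    | b => simp [stepQ15, d15]
    | a k =>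
      by_cases h : i = k
      · simp [stepQ15, h, d15]
      · simp [stepQ15, h, d15]

/-- Player 2's play against strategy σ: accumulates the history and the current
configuration. -/
noncomputable def hist15 {n m : ℕ} (hn : 0 < n)
    (σ : List ((Fin m → Q15 n) × A15 n) → (Fin m → Q15 n) → A15 n) :
    ℕ → List ((Fin m → Q15 n) × A15 n) × (Fin m → Q15 n)
  | 0 => ([], fun _ => .init)
  | k + 1 =>
    let p := hist15 hn σ k
    (p.1 ++ [(p.2, σ p.1 p.2)], fun j => stepQ15 hn j (p.2 j) (σ p.1 p.2))

lemma hist15_fst {n m : ℕ} (hn : 0 < n)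
    (σ : List ((Fin m → Q15 n) × A15 n) → (Fin m → Q15 n) → A15 n) (k : ℕ) :
    (hist15 hn σ k).1 = List.ofFn (fun i : Fin k =>
      ((hist15 hn σ i.1).2, σ (hist15 hn σ i.1).1 (hist15 hn σ i.1).2)) := by
  induction k with
  | zero => simp [hist15]
  | succ k ih =>
    rw [List.ofFn_succ']
    show (hist15 hn σ k).1 ++
      [((hist15 hn σ k).2, σ (hist15 hn σ k).1 (hist15 hn σ k).2)] = _
    simp only [List.concat_eq_append, Fin.val_last, Fin.coe_castSucc]
    rw [ih]

/-- The invariant maintained by Player 2 (for `n ≤ m`). -/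
def Inv15 {n m : ℕ} (q : Fin m → Q15 n) : Prop :=
  (∀ j, q j = Q15.init) ∨
  ((∀ j, ∃ i, q j = Q15.mid i) ∧ ∀ i, ∃ j, q j = Q15.mid i) ∨
  (∃ j, q j = Q15.sink)

lemma inv15_step {n m : ℕ} (hn : 0 < n) (hm : n ≤ m) (q q' : Fin m → Q15 n) (a : A15 n)
    (hq' : ∀ j, q' j = stepQ15 hn j (q j) a)
    (h : Inv15 q) : Inv15 q' := by
  have hm0 : 0 < m := lt_of_lt_of_le hn hm
  rcases h with h | ⟨h1, h2⟩ | ⟨j, hj⟩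
  · cases a with
    | b =>
      refine Or.inr (Or.inl ⟨fun j => ⟨_, by rw [hq' j, h j]; rfl⟩, fun i => ?_⟩)
      refine ⟨⟨i.1, lt_of_lt_of_le i.2 hm⟩, ?_⟩
      rw [hq', h]
      show Q15.mid ⟨i.1 % n, _⟩ = Q15.mid i
      congr 1
      exact Fin.ext (Nat.mod_eq_of_lt i.2)
    | a k =>
      exact Or.inr (Or.inr ⟨⟨0, hm0⟩, by rw [hq', h]; rfl⟩)
  · cases a with
    | b =>
      refine Or.inl fun j => ?_
      obtain ⟨i, hi⟩ := h1 j
      rw [hq' j, hi]; rfl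
    | a k =>
      obtain ⟨j, hj⟩ := h2 k
      refine Or.inr (Or.inr ⟨j, ?_⟩)
      rw [hq' j, hj]
      show (if k = k then Q15.sink else Q15.target) = Q15.sink
      simp
  · refine Or.inr (Or.inr ⟨j, ?_⟩)
    rw [hq' j, hj]
    cases a <;> rfl

lemma inv15_not_all_target {n m : ℕ} (hn : 0 < n) (hm : n ≤ m) (q : Fin m → Q15 n)
    (h : Inv15 q) : ¬ ∀ j, q j = Q15.target := by
  have hm0 : 0 < m := lt_of_lt_of_le hn hm
  intro hall
  rcases h with h | ⟨h1, _⟩ | ⟨j, hj⟩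
  · exact absurd ((h ⟨0, hm0⟩).symm.trans (hall ⟨0, hm0⟩)) (by simp)
  · obtain ⟨i, hi⟩ := h1 ⟨0, hm0⟩
    exact absurd (hi.symm.trans (hall ⟨0, hm0⟩)) (by simp)
  · exact absurd (hj.symm.trans (hall j)) (by simp)

/-- For the NFA of Figure 2, Player 1 wins the m-population game iff m < n:
the cut-off of this family is n. -/
theorem stmt15 (n : ℕ) (hn : 0 < n) (m : ℕ) :
    PopWins (d15 (n := n)) Q15.init Q15.target m ↔ m < n := by
  classical
  constructor
  · -- if Player 1 wins then m < n
    intro ⟨σ, hσ⟩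
    by_contra hm'
    have hm : n ≤ m := le_of_not_gt hm'
    set ρ : ℕ → (Fin m → Q15 n) := fun k => (hist15 hn σ k).2 with hρ
    set acts : ℕ → A15 n := fun k => σ (hist15 hn σ k).1 (hist15 hn σ k).2 with hacts
    have h0 : ρ 0 = fun _ => Q15.init := rfl
    have h1 : ∀ k, acts k = σ (List.ofFn (fun i : Fin k => (ρ i.1, acts i.1))) (ρ k) := by
      intro k
      rw [hacts, hρ]
      simp only []
      rw [hist15_fst hn σ k]
    have h2 : ∀ k j, d15 (ρ k j) (acts k) (ρ (k + 1) j) := by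
      intro k j
      show d15 (ρ k j) (acts k) (stepQ15 hn j ((hist15 hn σ k).2 j) (σ (hist15 hn σ k).1 (hist15 hn σ k).2))
      exact stepQ15_valid hn j _ _
    obtain ⟨N, hN⟩ := hσ ρ acts h0 h1 h2
    have hinv : ∀ k, Inv15 (ρ k) := by
      intro k
      induction k with
      | zero => exact Or.inl fun _ => rfl
      | succ k ih => exact inv15_step hn hm (ρ k) (ρ (k + 1)) (acts k) (fun j => rfl) ih
    exact inv15_not_all_target hn hm _ (hinv N) hN
  · -- if m < n then Player 1 wins
    intro hm
    refine ⟨fun _ q =>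
      if ∀ j, q j = Q15.init then A15.b
      else if h : ∃ i : Fin n, ∀ j, q j ≠ Q15.mid i then A15.a h.choose else A15.b, ?_⟩
    intro ρ acts h0 hacts htrans
    rcases Nat.eq_zero_or_pos m with hm0 | hm0
    · exact ⟨0, fun j => absurd j.2 (by omega)⟩
    -- step 0: all agents at init, play b
    have ha0 : acts 0 = A15.b := by
      rw [hacts 0]
      simp [h0]
    -- step 1: all agents at some mid state
    have hρ1 : ∀ j, ∃ i, ρ 1 j = Q15.mid i := by
      intro j
      have := htrans 0 j
      rw [h0, ha0] at this
      cases hq : ρ 1 j <;> rw [hq] at this <;> simp [d15] at this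
      exact ⟨_, rfl⟩
    choose f hf using hρ1
    -- not all at init at step 1
    have hnotinit : ¬ ∀ j, ρ 1 j = Q15.init := by
      intro h
      exact absurd ((h ⟨0, hm0⟩).symm.trans (hf ⟨0, hm0⟩)) (by simp)
    -- some mid state is unoccupied
    have hex : ∃ i : Fin n, ∀ j, ρ 1 j ≠ Q15.mid i := by
      by_contra h
      push_neg at h

      have h' : ∀ i : Fin n, ∃ j, ρ 1 j = Q15.mid i := by
        intro i
        obtain ⟨j, hj⟩ := h i
        exact ⟨j, hj⟩
      choose g hg using h'
      have hginj : Function.Injective g := by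
        intro i1 i2 h12
        have := (hg i1).symm.trans (h12 ▸ hg i2)
        simpa using this
      have := Fintype.card_le_of_injective g hginj
      simp at this
      omega
    have ha1 : acts 1 = A15.a hex.choose := by
      rw [hacts 1]
      exact (if_neg hnotinit).trans (dif_pos hex)
    -- step 2: everyone reaches the target
    refine ⟨2, fun j => ?_⟩
    have := htrans 1 j
    rw [hf j, ha1] at this
    have hne : f j ≠ hex.choose := by
      intro h
      exact hex.choose_spec j (h ▸ hf j)
    cases hq : ρ 2 j with
    | init => rw [hq] at this; simp [d15] at this
    | target => rfl
    | sink =>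
      rw [hq] at this
      simp [d15] at this
      exact absurd this hne
    | mid i => rw [hq] at this; simp [d15] at this
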